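/- Let q ≥ 3 and k ≥ 2 be integers, and let γ be the dominant root of Φ_{q,k}, i.e. the unique real root of Φ_{q,k}(t) = t^k − q t^{k−1} − t^{k−2} − ⋯ − t − 1 in (q, q+1). Then for all integers n ≥ 1, γ^{n−2} < γ^{n−1}·((q−1)/q) < F^{(k)}_{q,n} < γ^{n−1}·((q+2)/q) < γ^n. -/

import Mathlib

lemma geo_sum_lt' {x : ℝ} (hx0 : 0 < x) (hx1 : x < 1) (M : ℕ) :
    ∑ j ∈ Finset.Icc 1 M, x ^ j < x / (1 - x) := by
  have h1x : 0 < 1 - x := by linarith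
  have hsum : ∑ j ∈ Finset.Icc 1 M, x ^ j + 1 = ∑ j ∈ Finset.range (M+1), x ^ j := by
    induction M with
    | zero => simp
    | succ m ih =>
      rw [Finset.sum_Icc_succ_top (by omega), Finset.sum_range_succ]
      linarith
  have hgeo : ∑ j ∈ Finset.range (M+1), x ^ j = (1 - x ^ (M+1))/(1 - x) := by
    rw [geom_sum_eq (ne_of_lt hx1), div_eq_div_iff (by linarith) (by linarith)]
    ring
  have hxp : 0 < x ^ (M+1) := pow_pos hx0 _
  have : ∑ j ∈ Finset.Icc 1 M, x ^ j = (1 - x ^ (M+1))/(1-x) - 1 := by linarith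
  rw [this, div_sub' (ne_of_gt h1x), div_lt_div_iff₀ h1x h1x]
  nlinarith

lemma sum_zpow_lt' {γ : ℝ} (hγ : 1 < γ) (s : Finset ℕ) (m : ℤ)
    (h : ∀ i ∈ s, m - (i : ℤ) ≤ -1) :
    ∑ i ∈ s, γ ^ (m - (i : ℤ)) < 1 / (γ - 1) := by
  have hγ0 : 0 < γ := by linarith
  set x : ℝ := γ⁻¹ with hxdef
  have hx0 : 0 < x := inv_pos.mpr hγ0
  have hx1 : x < 1 := inv_lt_one_of_one_lt₀ hγ
  set f : ℕ → ℕ := fun i => ((i : ℤ) - m).toNat with hfdef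
  have hfval : ∀ i ∈ s, γ ^ (m - (i : ℤ)) = x ^ f i := by
    intro i hi
    have h1 : (1 : ℤ) ≤ (i : ℤ) - m := by have := h i hi; omega
    have h2 : ((f i : ℕ) : ℤ) = (i : ℤ) - m := Int.toNat_of_nonneg (by omega)
    rw [show m - (i : ℤ) = -((i : ℤ) - m) by ring, ← h2, zpow_neg, zpow_natCast,
      ← inv_pow]
  rw [Finset.sum_congr rfl hfval]
  have hinj : ∀ a ∈ s, ∀ b ∈ s, f a = f b → a = b := by
    intro a ha b hb hab
    have h1 := h a ha; have h2 := h b hb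
    simp only [hfdef] at hab
    omega
  rw [← Finset.sum_image (g := f) (f := fun j => x ^ j) hinj]
  have hsub : s.image f ⊆ Finset.Icc 1 (s.sup f) := by
    intro j hj
    simp only [Finset.mem_image] at hj
    obtain ⟨i, hi, rfl⟩ := hj
    have := h i hi
    simp only [Finset.mem_Icc]
    refine ⟨?_, Finset.le_sup hi⟩
    simp only [hfdef]
    omega
  calc ∑ j ∈ s.image f, x ^ j ≤ ∑ j ∈ Finset.Icc 1 (s.sup f), x ^ j :=
        Finset.sum_le_sum_of_subset_of_nonneg hsub (fun j _ _ => le_of_lt (pow_pos hx0 j))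
    _ < x / (1 - x) := geo_sum_lt' hx0 hx1 _
    _ = 1 / (γ - 1) := by
        rw [div_eq_div_iff (by nlinarith [inv_pos.mpr hγ0]) (by linarith)]
        simp only [hxdef]
        field_simp

lemma key_identity' {γ : ℝ} {q : ℤ} {k : ℕ} (hk : 2 ≤ k) (hγ0 : 0 < γ)
    (hroot : γ ^ k - (q : ℝ) * γ ^ (k - 1) - ∑ i ∈ Finset.range (k - 1), γ ^ i = 0)
    (m : ℤ) :
    (q : ℝ) * γ ^ (m - 1) + ∑ i ∈ Finset.Icc 2 k, γ ^ (m - (i : ℤ)) = γ ^ m := by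
  have hne : γ ≠ 0 := ne_of_gt hγ0
  have e1 : ∑ i ∈ Finset.Icc 2 k, γ ^ (m - (i : ℤ)) =
      ∑ j ∈ Finset.range (k - 1), γ ^ (m - (k : ℤ)) * γ ^ j := by
    refine Finset.sum_nbij' (fun i => k - i) (fun j => k - j) ?_ ?_ ?_ ?_ ?_
    · intro i hi; simp only [Finset.mem_Icc] at hi; simp only [Finset.mem_range]; omega
    · intro j hj; simp only [Finset.mem_range] at hj; simp only [Finset.mem_Icc]; omega
    · intro i hi; simp only [Finset.mem_Icc] at hi; show k - (k - i) = i; omega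
    · intro j hj; simp only [Finset.mem_range] at hj; show k - (k - j) = j; omega
    · intro i hi
      simp only [Finset.mem_Icc] at hi
      rw [← zpow_natCast γ (k - i), ← zpow_add₀ hne]
      congr 1
      omega
  have hpow : γ ^ (m - 1) = γ ^ (m - (k : ℤ)) * γ ^ ((k - 1 : ℕ)) := by
    rw [← zpow_natCast γ (k - 1), ← zpow_add₀ hne]
    congr 1
    omega
  have hpow2 : γ ^ m = γ ^ (m - (k : ℤ)) * γ ^ (k : ℕ) := by
    rw [← zpow_natCast γ k, ← zpow_add₀ hne]
    congr 1
    omega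
  have e3 : (q : ℝ) * γ ^ (k - 1) + ∑ i ∈ Finset.range (k - 1), γ ^ i = γ ^ k := by
    linarith
  rw [e1, ← Finset.mul_sum, hpow, hpow2, ← e3]
  ring

/-- For integers `q ≥ 3` and `k ≥ 2`, with `γ` the dominant root of
`Φ_{q,k}` (its unique real root in `(q, q+1)`), for all integers `n ≥ 1` one has
`γ^{n−2} < γ^{n−1}·((q−1)/q) < F n < γ^{n−1}·((q+2)/q) < γ^n`. -/
theorem qk_fib_exponential_growth
    (q : ℤ) (k : ℕ) (hq : 3 ≤ q) (hk : 2 ≤ k)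
    (F : ℤ → ℝ)
    (hF0 : ∀ n : ℤ, 2 - (k : ℤ) ≤ n → n ≤ 0 → F n = 0)
    (hF1 : F 1 = 1)
    (hFrec : ∀ n : ℤ, 2 ≤ n →
      F n = (q : ℝ) * F (n - 1) + ∑ i ∈ Finset.Icc 2 k, F (n - (i : ℤ)))
    (γ : ℝ)
    (hγ_lb : (q : ℝ) < γ) (hγ_ub : γ < (q : ℝ) + 1)
    (hγ_root : γ ^ k - (q : ℝ) * γ ^ (k - 1) - ∑ i ∈ Finset.range (k - 1), γ ^ i = 0) :
    ∀ n : ℤ, 1 ≤ n →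
      γ ^ (n - 2) < γ ^ (n - 1) * (((q : ℝ) - 1) / (q : ℝ)) ∧
      γ ^ (n - 1) * (((q : ℝ) - 1) / (q : ℝ)) < F n ∧
      F n < γ ^ (n - 1) * (((q : ℝ) + 2) / (q : ℝ)) ∧
      γ ^ (n - 1) * (((q : ℝ) + 2) / (q : ℝ)) < γ ^ n := by
  have hq3 : (3 : ℝ) ≤ (q : ℝ) := by exact_mod_cast hq
  have hq0 : (0 : ℝ) < (q : ℝ) := by linarith
  have hq1 : (0 : ℝ) < (q : ℝ) - 1 := by linarith
  have hγ0 : 0 < γ := by linarith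
  have hγ1 : 1 < γ := by linarith
  have hne : γ ≠ 0 := ne_of_gt hγ0
  set b : ℝ := ((q : ℝ) - 1) / (q : ℝ) with hb_def
  set u : ℝ := ((q : ℝ) + 2) / (q : ℝ) with hu_def
  set r : ℝ := 1 / (q : ℝ) with hr_def
  set c : ℝ := 1 / ((q : ℝ) * ((q : ℝ) - 1)) with hc_def
  clear_value b u r c
  have hc : 0 < c := by rw [hc_def]; positivity
  have hb : 0 < b := by rw [hb_def]; positivity
  have hu : 0 < u := by rw [hu_def]; positivity
  have hr : 0 < r := by rw [hr_def]; positivity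
  have e4 : (q : ℝ) * c = c + r := by
    rw [hc_def, hr_def]; field_simp; ring
  have e6 : b + r = 1 := by rw [hb_def, hr_def]; field_simp; ring
  have e7 : c < r := by
    rw [hc_def, hr_def]
    apply div_lt_div_of_pos_left one_pos hq0
    nlinarith
  have key := key_identity' hk hγ0 hγ_root
  have main : ∀ m : ℕ, ∀ n : ℤ, 1 ≤ n → n ≤ (m : ℤ) →
      γ ^ (n - 1) * b + c < F n ∧ F n < γ ^ (n - 1) * u := by
    intro m
    induction m with
    | zero => intro n h1 h2; omega
    | succ m ih =>
      intro n h1 h2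
      rcases eq_or_lt_of_le h1 with h1e | h1l
      · -- n = 1
        rw [← h1e, hF1, show (1:ℤ) - 1 = 0 by ring, zpow_zero]
        simp only [one_mul]
        constructor
        · linarith
        · rw [hu_def, lt_div_iff₀ hq0]; linarith
      · -- n ≥ 2
        have hn2 : (2 : ℤ) ≤ n := h1l
        have hrec := hFrec n hn2
        set A : ℝ := ∑ i ∈ Finset.Icc 2 k, γ ^ (n - 1 - (i : ℤ)) with hA_def
        set T : ℝ := ∑ i ∈ Finset.Icc 2 k,
          (if (n : ℤ) ≤ (i : ℤ) then γ ^ (n - 1 - (i : ℤ)) else 0) with hT_def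
        have hkeyn : (q : ℝ) * γ ^ (n - 2) + A = γ ^ (n - 1) := by
          have hkk := key (n - 1)
          rw [show n - 1 - 1 = n - 2 by ring] at hkk
          exact hkk
        clear_value A T
        have hT : T < 1 / ((q : ℝ) - 1) := by
          rw [hT_def, ← Finset.sum_filter]
          have hh1 : ∑ i ∈ Finset.filter (fun i : ℕ => n ≤ (i : ℤ)) (Finset.Icc 2 k),
              γ ^ (n - 1 - (i : ℤ)) < 1 / (γ - 1) := by
            apply sum_zpow_lt' hγ1
            intro i hi
            simp only [Finset.mem_filter] at hi
            omega
          have hh2 : 1 / (γ - 1) < 1 / ((q : ℝ) - 1) :=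
            div_lt_div_of_pos_left one_pos hq1 (by linarith)
          exact hh1.trans hh2
        -- IH for n - 1
        obtain ⟨hL1, hU1⟩ := ih (n - 1) (by omega) (by omega)
        rw [show n - 1 - 1 = n - 2 by ring] at hL1 hU1
        -- lower termwise
        have hlow : ∀ i ∈ Finset.Icc 2 k,
            (γ ^ (n - 1 - (i : ℤ)) -
              (if (n : ℤ) ≤ (i : ℤ) then γ ^ (n - 1 - (i : ℤ)) else 0)) * b ≤ F (n - i) := by
          intro i hi
          simp only [Finset.mem_Icc] at hi
          by_cases hni : (n : ℤ) ≤ (i : ℤ)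
          · rw [if_pos hni, sub_self, zero_mul, hF0 (n - i) (by omega) (by omega)]
          · rw [if_neg hni, sub_zero]
            obtain ⟨hLi, _⟩ := ih (n - i) (by omega) (by omega)
            rw [show n - (i : ℤ) - 1 = n - 1 - (i : ℤ) by ring] at hLi
            linarith
        have hSlow : (A - T) * b ≤ ∑ i ∈ Finset.Icc 2 k, F (n - (i : ℤ)) := by
          calc (A - T) * b
              = ∑ i ∈ Finset.Icc 2 k, (γ ^ (n - 1 - (i : ℤ)) -
                  (if (n : ℤ) ≤ (i : ℤ) then γ ^ (n - 1 - (i : ℤ)) else 0)) * b := by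
                rw [← Finset.sum_mul, Finset.sum_sub_distrib, ← hA_def, ← hT_def]
            _ ≤ _ := Finset.sum_le_sum hlow
        -- upper termwise
        have hup : ∀ i ∈ Finset.Icc 2 k, F (n - (i : ℤ)) ≤ γ ^ (n - 1 - (i : ℤ)) * u := by
          intro i hi
          simp only [Finset.mem_Icc] at hi
          by_cases hni : (n : ℤ) ≤ (i : ℤ)
          · rw [hF0 (n - i) (by omega) (by omega)]
            positivity
          · obtain ⟨_, hUi⟩ := ih (n - i) (by omega) (by omega)
            rw [show n - (i : ℤ) - 1 = n - 1 - (i : ℤ) by ring] at hUi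
            linarith
        have hSup : ∑ i ∈ Finset.Icc 2 k, F (n - (i : ℤ)) ≤ A * u := by
          calc ∑ i ∈ Finset.Icc 2 k, F (n - (i : ℤ))
              ≤ ∑ i ∈ Finset.Icc 2 k, γ ^ (n - 1 - (i : ℤ)) * u := Finset.sum_le_sum hup
            _ = A * u := by rw [← Finset.sum_mul, hA_def]
        -- products
        have hmulL : (q : ℝ) * (γ ^ (n - 2) * b + c) < (q : ℝ) * F (n - 1) :=
          mul_lt_mul_of_pos_left hL1 hq0
        have hmulU : (q : ℝ) * F (n - 1) < (q : ℝ) * (γ ^ (n - 2) * u) :=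
          mul_lt_mul_of_pos_left hU1 hq0
        have f1 : (q : ℝ) * γ ^ (n - 2) * b + A * b = γ ^ (n - 1) * b := by
          rw [← hkeyn]; ring
        have f1u : (q : ℝ) * γ ^ (n - 2) * u + A * u = γ ^ (n - 1) * u := by
          rw [← hkeyn]; ring
        have e5 : T * b < r := by
          have h1 : T * b < (1 / ((q : ℝ) - 1)) * b := mul_lt_mul_of_pos_right hT hb
          have h2 : (1 / ((q : ℝ) - 1)) * b = r := by
            rw [hb_def, hr_def]; field_simp
          linarith
        rw [hrec]
        constructor
        · linarith [hmulL, hSlow, f1, e5, e4]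
        · linarith [hmulU, hSup, f1u]
  intro n hn
  obtain ⟨hL, hU⟩ := main (n.toNat) n hn (by omega)
  have hzpos : (0 : ℝ) < γ ^ (n - 1) := zpow_pos hγ0 _
  refine ⟨?_, by linarith, hU, ?_⟩
  · rw [show n - 2 = n - 1 - 1 by ring, zpow_sub_one₀ hne]
    have hinv : γ⁻¹ < b := by
      have h1 : γ⁻¹ < 1 / (q : ℝ) := by
        rw [inv_eq_one_div]
        exact one_div_lt_one_div_of_lt hq0 hγ_lb
      have h2 : ((q : ℝ) - 2) / (q : ℝ) > 0 := div_pos (by linarith) hq0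
      have h3 : b - 1 / (q : ℝ) = ((q : ℝ) - 2) / (q : ℝ) := by rw [hb_def]; ring
      linarith
    exact mul_lt_mul_of_pos_left hinv hzpos
  · have h3 : γ ^ (n - 1) * γ = γ ^ n := by
      rw [← zpow_add_one₀ hne]
      congr 1
      ring
    have h4 : u < γ := by
      rw [hu_def, div_lt_iff₀ hq0]
      nlinarith
    calc γ ^ (n - 1) * u < γ ^ (n - 1) * γ := mul_lt_mul_of_pos_left h4 hzpos
      _ = γ ^ n := h3
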